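/- Let h : [0,∞) → [0,∞) be continuous with h(0) = 0, and let γ ∈ (0,1). If h is regularly varying at infinity of index β with β(1−γ) < 1, then for every λ > 0 the integral ∫₀¹ h(λ γ(1−u)^{γ−1}) du is finite, and lim_{ε→0} ∫₀^ε h(λ u^{γ−1}) du = 0. -/

import Mathlib

open MeasureTheory Filter

lemma potter_bound (h : ℝ → ℝ) (ρ : ℝ) (hρ0 : 0 < ρ)
    (hcont : ContinuousOn h (Set.Ici 0))
    (hnonneg : ∀ x : ℝ, 0 ≤ x → 0 ≤ h x)
    (hlim : ∀ᶠ t in atTop, 0 < h t ∧ h (t * 2) ≤ 2 ^ ρ * h t) :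
    ∃ C : ℝ, 0 < C ∧ ∀ s : ℝ, 0 ≤ s → h s ≤ C * (1 + s ^ ρ) := by
  have h2ρ : (1:ℝ) ≤ 2 ^ ρ := by
    calc (1:ℝ) = (2:ℝ) ^ (0:ℝ) := (Real.rpow_zero 2).symm
    _ ≤ 2 ^ ρ := Real.rpow_le_rpow_of_exponent_le one_le_two hρ0.le
  obtain ⟨T₀, hT₀⟩ := hlim.exists_forall_of_atTop
  set T : ℝ := max T₀ 1 with hTdef
  have hT1 : (1:ℝ) ≤ T := le_max_right _ _
  have hT0 : (0:ℝ) < T := lt_of_lt_of_le one_pos hT1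
  have hT : ∀ t : ℝ, T ≤ t → 0 < h t ∧ h (t * 2) ≤ 2 ^ ρ * h t := fun t ht =>
    hT₀ t (le_trans (le_max_left _ _) ht)
  -- bound on the compact set [0, 2T]
  obtain ⟨M₀, hM₀⟩ := (isCompact_Icc (a := (0:ℝ)) (b := 2 * T)).exists_bound_of_continuousOn
    (hcont.mono (fun x hx => hx.1))
  set M : ℝ := max M₀ 0 with hMdef
  have hM0 : 0 ≤ M := le_max_right _ _
  have hM : ∀ s : ℝ, 0 ≤ s → s ≤ 2 * T → h s ≤ M := by
    intro s hs hs2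
    calc h s ≤ ‖h s‖ := le_abs_self _
    _ ≤ M₀ := hM₀ s ⟨hs, hs2⟩
    _ ≤ M := le_max_left _ _
  -- key induction
  have key : ∀ n : ℕ, ∀ s : ℝ, T ≤ s → s ≤ T * 2 ^ (n + 1) →
      h s ≤ M * 2 ^ ρ * (s / T) ^ ρ := by
    intro n
    induction n with
    | zero =>
      intro s hs hs2
      have h1 : (1:ℝ) ≤ s / T := (one_le_div hT0).mpr hs
      have h2 : (1:ℝ) ≤ (s / T) ^ ρ := by
        calc (1:ℝ) = 1 ^ ρ := (Real.one_rpow ρ).symm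
        _ ≤ (s / T) ^ ρ := Real.rpow_le_rpow zero_le_one h1 hρ0.le
      have h2T : T * 2 ^ (0 + 1) = 2 * T := by norm_num; ring
      have hsM := hM s (le_trans hT0.le hs) (by linarith [h2T ▸ hs2])
      have h4 : M * 1 ≤ M * (2 ^ ρ * (s / T) ^ ρ) :=
        mul_le_mul_of_nonneg_left (by nlinarith) hM0
      linarith [hsM, h4]
    | succ n ih =>
      intro s hs hs2
      by_cases hc : s ≤ T * 2 ^ (n + 1)
      · exact ih s hs hc
      · push_neg at hc
        have hsT2 : T ≤ s / 2 := by
          have : T * 2 ≤ T * 2 ^ (n + 1) := by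
            have : (2:ℝ) ≤ 2 ^ (n+1) := by
              calc (2:ℝ) = 2 ^ 1 := (pow_one 2).symm
              _ ≤ 2 ^ (n+1) := pow_le_pow_right₀ one_le_two (Nat.succ_le_succ (Nat.zero_le n))
            nlinarith
          linarith [hc, this]
        have hs2' : s / 2 ≤ T * 2 ^ (n + 1) := by
          have : (T * 2 ^ (n + 2)) = (T * 2 ^ (n+1)) * 2 := by ring
          linarith [hs2, this ▸ hs2]
        have hih := ih (s / 2) hsT2 hs2'
        have hstep := (hT (s / 2) hsT2).2
        have hEq : (s / 2) * 2 = s := by ring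
        rw [hEq] at hstep
        have hmul : (2:ℝ) ^ ρ * (s / 2 / T) ^ ρ = (s / T) ^ ρ := by
          rw [← Real.mul_rpow (by norm_num) (div_nonneg (div_nonneg (by linarith) two_pos.le) hT0.le)]
          congr 1
          field_simp
        calc h s ≤ 2 ^ ρ * h (s / 2) := hstep
        _ ≤ 2 ^ ρ * (M * 2 ^ ρ * (s / 2 / T) ^ ρ) := by
          apply mul_le_mul_of_nonneg_left hih (by positivity)
        _ = M * 2 ^ ρ * (2 ^ ρ * (s / 2 / T) ^ ρ) := by ring
        _ = M * 2 ^ ρ * (s / T) ^ ρ := by rw [hmul]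
  refine ⟨M * 2 ^ ρ + 1, by positivity, ?_⟩
  intro s hs
  have hsρ : 0 ≤ s ^ ρ := Real.rpow_nonneg hs ρ
  by_cases hcase : s ≤ T
  · have hsM := hM s hs (by linarith)
    nlinarith [mul_le_mul_of_nonneg_left h2ρ hM0,
      mul_nonneg (mul_nonneg hM0 (le_trans zero_le_one h2ρ)) hsρ]
  · push_neg at hcase
    obtain ⟨n, hn⟩ := pow_unbounded_of_one_lt (s / T) (one_lt_two (α := ℝ))
    have hbound := key n s hcase.le (by
      have : s / T < 2 ^ (n+1) := lt_of_lt_of_le hn (pow_le_pow_right₀ one_le_two (Nat.le_succ n))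
      calc s = T * (s / T) := by field_simp
      _ ≤ T * 2 ^ (n+1) := by nlinarith [hT0])
    have hdiv : (s / T) ^ ρ ≤ s ^ ρ := by
      apply Real.rpow_le_rpow (by positivity) _ hρ0.le
      calc s / T ≤ s / 1 := by apply div_le_div_of_nonneg_left (by linarith) one_pos hT1
      _ = s := div_one s
    have h2ρ0 : (0:ℝ) < 2 ^ ρ := by positivity
    nlinarith [hbound, hdiv, mul_le_mul_of_nonneg_left hdiv (mul_nonneg hM0 h2ρ0.le)]

lemma aux_indicator_integrable (h : ℝ → ℝ) (γ ρ C c : ℝ)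
    (hγ1 : γ < 1) (hρ0 : 0 < ρ) (hr : -1 < (γ - 1) * ρ)
    (hcont : ContinuousOn h (Set.Ici 0)) (hnonneg : ∀ x : ℝ, 0 ≤ x → 0 ≤ h x)
    (hC : ∀ s : ℝ, 0 ≤ s → h s ≤ C * (1 + s ^ ρ)) (hc : 0 < c) :
    IntegrableOn (fun u : ℝ => h (c * u ^ (γ - 1))) (Set.Ioo 0 1) := by
  have hint : IntegrableOn (fun x : ℝ => x ^ ((γ - 1) * ρ)) (Set.Ioo 0 1) :=
    ((intervalIntegral.intervalIntegrable_rpow' hr (a := 0) (b := 1)).1).mono_set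
      Set.Ioo_subset_Ioc_self
  have hg : IntegrableOn (fun u : ℝ => C + C * c ^ ρ * u ^ ((γ - 1) * ρ)) (Set.Ioo 0 1) := by
    apply Integrable.add
    · exact (integrableOn_const_iff).mpr (Or.inr measure_Ioo_lt_top)
    · exact hint.const_mul _
  have hmeas : AEStronglyMeasurable (fun u : ℝ => h (c * u ^ (γ - 1)))
      (volume.restrict (Set.Ioo 0 1)) := by
    have hψ : ContinuousOn (fun u : ℝ => c * u ^ (γ - 1)) (Set.Ioo 0 1) := by
      apply continuousOn_const.mul
      exact ContinuousOn.rpow_const continuousOn_id (fun x hx => Or.inl (ne_of_gt hx.1))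
    have hmaps : Set.MapsTo (fun u : ℝ => c * u ^ (γ - 1)) (Set.Ioo 0 1) (Set.Ici 0) := by
      intro u hu
      have : (0:ℝ) ≤ c * u ^ (γ - 1) :=
        mul_nonneg hc.le (Real.rpow_nonneg hu.1.le _)
      exact this
    exact (hcont.comp hψ hmaps).aestronglyMeasurable measurableSet_Ioo
  apply Integrable.mono' hg hmeas
  rw [ae_restrict_iff' measurableSet_Ioo]
  apply ae_of_all
  intro u hu
  have hu0 : (0:ℝ) < u := hu.1
  have harg : (0:ℝ) ≤ c * u ^ (γ - 1) := mul_nonneg hc.le (Real.rpow_nonneg hu0.le _)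
  rw [Real.norm_of_nonneg (hnonneg _ harg)]
  have hpow : (c * u ^ (γ - 1)) ^ ρ = c ^ ρ * u ^ ((γ - 1) * ρ) := by
    rw [Real.mul_rpow hc.le (Real.rpow_nonneg hu0.le _), Real.rpow_mul hu0.le]
  calc h (c * u ^ (γ - 1)) ≤ C * (1 + (c * u ^ (γ - 1)) ^ ρ) := hC _ harg
  _ = C + C * c ^ ρ * u ^ ((γ - 1) * ρ) := by rw [hpow]; ring

/-- If `h ≥ 0` is continuous on `[0,∞)` with `h(0) = 0` and regularly varying of
index `β` with `β(1-γ) < 1` for `γ ∈ (0,1)`, then `∫₀¹ h(λγ(1-u)^{γ-1}) du` is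
finite for every `λ > 0`, and `∫₀^ε h(λ u^{γ-1}) du → 0` as `ε → 0⁺`. -/
theorem stmt12 (h : ℝ → ℝ) (γ β : ℝ) (hγ0 : 0 < γ) (hγ1 : γ < 1)
    (hβ : β * (1 - γ) < 1)
    (hcont : ContinuousOn h (Set.Ici 0)) (h0 : h 0 = 0)
    (hnonneg : ∀ x : ℝ, 0 ≤ x → 0 ≤ h x)
    (hRV : ∀ x : ℝ, 0 < x →
      Tendsto (fun t : ℝ => h (t * x) / h t) atTop (nhds (x ^ β))) :
    (∀ l : ℝ, 0 < l →
      IntegrableOn (fun u => h (l * (γ * (1 - u) ^ (γ - 1)))) (Set.Ioo 0 1)) ∧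
    (∀ l : ℝ, 0 < l →
      Tendsto (fun ε : ℝ => ∫ u in Set.Ioo 0 ε, h (l * u ^ (γ - 1)))
        (nhdsWithin 0 (Set.Ioi 0)) (nhds 0)) := by
  have hγ' : (0:ℝ) < 1 - γ := by linarith
  have hβ' : β < (1 - γ)⁻¹ := by
    rw [← one_div]
    exact (lt_div_iff₀ hγ').mpr (by linarith)
  have hinv : (0:ℝ) < (1 - γ)⁻¹ := by positivity
  set ρ : ℝ := (max β 0 + (1 - γ)⁻¹) / 2 with hρdef
  have hmax0 : (0:ℝ) ≤ max β 0 := le_max_right _ _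
  have hmaxβ : β ≤ max β 0 := le_max_left _ _
  have hmaxlt : max β 0 < (1 - γ)⁻¹ := max_lt hβ' hinv
  have hρ0 : 0 < ρ := by rw [hρdef]; linarith
  have hρβ : β < ρ := by rw [hρdef]; linarith
  have hρlt : ρ < (1 - γ)⁻¹ := by rw [hρdef]; linarith
  have hργ : ρ * (1 - γ) < 1 := by
    have := inv_mul_cancel₀ (ne_of_gt hγ')
    nlinarith
  have hr : -1 < (γ - 1) * ρ := by nlinarith
  -- eventual bounds from regular variation at x = 2
  have hRV2 := hRV 2 two_pos
  have h2β : (0:ℝ) < 2 ^ β := Real.rpow_pos_of_pos two_pos β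
  have h2lt : (2:ℝ) ^ β < 2 ^ ρ := Real.rpow_lt_rpow_of_exponent_lt one_lt_two hρβ
  have hev1 := hRV2.eventually_const_lt h2β
  have hev2 := hRV2.eventually_lt_const h2lt
  have hlim : ∀ᶠ t in atTop, 0 < h t ∧ h (t * 2) ≤ 2 ^ ρ * h t := by
    filter_upwards [hev1, hev2, eventually_ge_atTop (0:ℝ)] with t h1 h2 h3
    have hht : 0 < h t := by
      rcases lt_or_ge 0 (h t) with hp | hp
      · exact hp
      · have hz : h t = 0 := le_antisymm hp (hnonneg t h3)
        rw [hz, div_zero] at h1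
        linarith
    exact ⟨hht, le_of_lt ((div_lt_iff₀ hht).mp h2)⟩
  obtain ⟨C, hC0, hCb⟩ := potter_bound h ρ hρ0 hcont hnonneg hlim
  have hind : ∀ c : ℝ, 0 < c →
      Integrable ((Set.Ioo (0:ℝ) 1).indicator fun u => h (c * u ^ (γ - 1))) := by
    intro c hc
    exact (integrable_indicator_iff measurableSet_Ioo).mpr
      (aux_indicator_integrable h γ ρ C c hγ1 hρ0 hr hcont hnonneg hCb hc)
  constructor
  · intro l hl
    have h1 := hind (l * γ) (mul_pos hl hγ0)
    have h2 := h1.comp_sub_left 1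
    have h3 : (fun u : ℝ =>
        ((Set.Ioo (0:ℝ) 1).indicator fun u => h ((l * γ) * u ^ (γ - 1))) (1 - u))
        = (Set.Ioo (0:ℝ) 1).indicator fun u => h (l * (γ * (1 - u) ^ (γ - 1))) := by
      funext u
      by_cases hu : u ∈ Set.Ioo (0:ℝ) 1
      · have hu' : (1:ℝ) - u ∈ Set.Ioo (0:ℝ) 1 := ⟨by linarith [hu.2], by linarith [hu.1]⟩
        rw [Set.indicator_of_mem hu', Set.indicator_of_mem hu, mul_assoc]
      · have hu' : (1:ℝ) - u ∉ Set.Ioo (0:ℝ) 1 := fun hmem =>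
          hu ⟨by linarith [hmem.2], by linarith [hmem.1]⟩
        rw [Set.indicator_of_notMem hu', Set.indicator_of_notMem hu]
    rw [h3] at h2
    exact (integrable_indicator_iff measurableSet_Ioo).mp h2
  · intro l hl
    have hF := hind l hl
    have hid : Tendsto (fun ε : ℝ => ε) (nhdsWithin 0 (Set.Ioi 0)) (nhds (0:ℝ)) :=
      tendsto_id.mono_left nhdsWithin_le_nhds
    have hofReal : Tendsto (fun ε : ℝ => ENNReal.ofReal ε) (nhdsWithin 0 (Set.Ioi 0))
        (nhds 0) := by
      have := (ENNReal.continuous_ofReal.tendsto 0).comp hid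
      simpa [Function.comp_def] using this
    have hμ : Tendsto (fun ε : ℝ => volume (Set.Ioo (0:ℝ) ε)) (nhdsWithin 0 (Set.Ioi 0))
        (nhds 0) := by
      apply hofReal.congr
      intro ε
      rw [Real.volume_Ioo, sub_zero]
    have hkey := hF.tendsto_setIntegral_nhds_zero hμ
    have heq : (fun ε : ℝ => ∫ u in Set.Ioo 0 ε,
          ((Set.Ioo (0:ℝ) 1).indicator fun u => h (l * u ^ (γ - 1))) u)
        =ᶠ[nhdsWithin 0 (Set.Ioi 0)] fun ε : ℝ => ∫ u in Set.Ioo 0 ε, h (l * u ^ (γ - 1)) := by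
      filter_upwards [Ioo_mem_nhdsGT_of_mem (Set.mem_Ico.mpr ⟨le_refl (0:ℝ), one_pos⟩)]
        with ε hε
      apply setIntegral_congr_fun measurableSet_Ioo
      intro u hu
      have hmem : u ∈ Set.Ioo (0:ℝ) 1 := ⟨hu.1, lt_trans hu.2 hε.2⟩
      exact Set.indicator_of_mem hmem _
    exact Tendsto.congr' heq hkey
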